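/- arXiv:1805.11702 — 3 statements merged into one kernel-verified Lean document; each statement's English description precedes it below -/
import Mathlib

section
/- Let X be a topological space, let 𝕜 be a topological field whose topology is T1, and for i = 1, …, n let Aᵢ : X → Matrix(mᵢ, m, 𝕜) be matrix-valued maps all of whose entries are continuous. Then the function X → ℕ sending x to the 𝕜-dimension of the intersection ⋂ᵢ ker(Aᵢ(x)), where Aᵢ(x) is viewed as a linear map 𝕜^m → 𝕜^{mᵢ}, is upper semicontinuous. -/
open Matrix Module Submodule

/-- From a family whose span has dimension `s`, one can extract `s` linearly
independent members. -/
private lemma exists_comp_linearIndependent {𝕜 V : Type*} [Field 𝕜] [AddCommGroup V]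
    [Module 𝕜 V] {ι : Type*} [Fintype ι] {s : ℕ} (v : ι → V)
    (hs : finrank 𝕜 (span 𝕜 (Set.range v)) = s) :
    ∃ q : Fin s → ι, LinearIndependent 𝕜 (v ∘ q) := by
  classical
  obtain ⟨b, hb_sub, hb_span, hb_ind⟩ := exists_linearIndependent 𝕜 (Set.range v)
  have hbfin : b.Finite := (Set.finite_range v).subset hb_sub
  haveI : Fintype b := hbfin.fintype
  have hcard : Fintype.card b = s := by
    have := finrank_span_set_eq_card (R := 𝕜) (s := b) hb_ind
    rw [hb_span, hs, Set.toFinset_card] at this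
    exact this.symm
  let e : Fin s ≃ b := (Fintype.equivFinOfCardEq hcard).symm
  have hmem : ∀ j : Fin s, (e j : V) ∈ Set.range v := fun j => hb_sub (e j).2
  choose q hq using hmem
  refine ⟨q, ?_⟩
  have : v ∘ q = (Subtype.val : b → V) ∘ e := funext fun j => hq j
  rw [this]
  exact hb_ind.comp e e.injective

/-- If `s` members of a family are linearly independent, the span of the family has
dimension at least `s`. -/
private lemma le_finrank_span_of_comp_linearIndependent {𝕜 V : Type*} [Field 𝕜]
    [AddCommGroup V] [Module 𝕜 V] [FiniteDimensional 𝕜 V] {ι : Type*} {s : ℕ}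
    (v : ι → V) (q : Fin s → ι) (h : LinearIndependent 𝕜 (v ∘ q)) :
    s ≤ finrank 𝕜 (span 𝕜 (Set.range v)) := by
  have h1 : finrank 𝕜 (span 𝕜 (Set.range (v ∘ q))) = s := by
    rw [finrank_span_eq_card h, Fintype.card_fin]
  have h2 : span 𝕜 (Set.range (v ∘ q)) ≤ span 𝕜 (Set.range v) :=
    span_mono (Set.range_comp_subset_range q v)
  calc s = finrank 𝕜 (span 𝕜 (Set.range (v ∘ q))) := h1.symm
    _ ≤ finrank 𝕜 (span 𝕜 (Set.range v)) := Submodule.finrank_mono h2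

/-- The rank of a continuously varying matrix does not drop on a neighborhood:
lower semicontinuity of the rank. -/
private lemma eventually_rank_le {X : Type*} [TopologicalSpace X] {𝕜 : Type*} [Field 𝕜]
    [TopologicalSpace 𝕜] [IsTopologicalRing 𝕜] [T1Space 𝕜] {ι : Type*} [Fintype ι] {m : ℕ}
    (B : X → Matrix ι (Fin m) 𝕜) (hB : ∀ j l, Continuous fun x => B x j l) (x₀ : X) :
    ∀ᶠ x in nhds x₀, (B x₀).rank ≤ (B x).rank := by
  classical
  set s := (B x₀).rank with hs
  -- extract s independent columns of B x₀
  have hcols : finrank 𝕜 (span 𝕜 (Set.range (B x₀)ᵀ)) = s :=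
    ((B x₀).rank_eq_finrank_span_cols).symm
  obtain ⟨q, hq⟩ := exists_comp_linearIndependent (B x₀)ᵀ hcols
  -- the ι × s matrix D with those columns has rank s
  set D : Matrix ι (Fin s) 𝕜 := fun i j => B x₀ i (q j) with hD
  have hDT : Dᵀ = (B x₀)ᵀ ∘ q := by
    ext j i; rfl
  have hrankD : D.rank = s := by
    rw [D.rank_eq_finrank_span_cols]
    change finrank 𝕜 (span 𝕜 (Set.range Dᵀ)) = s
    rw [hDT, finrank_span_eq_card hq, Fintype.card_fin]
  -- extract s independent rows of D
  have hrows : finrank 𝕜 (span 𝕜 (Set.range Dᵀᵀ)) = s := by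
    have := Dᵀ.rank_eq_finrank_span_cols.symm.trans ((rank_transpose D).trans hrankD)
    exact this
  obtain ⟨p, hp⟩ := exists_comp_linearIndependent Dᵀᵀ hrows
  -- the square submatrix of B x₀ given by p, q is invertible
  have hsq : IsUnit ((B x₀).submatrix p q) := by
    rw [← linearIndependent_rows_iff_isUnit]
    have : (fun i => ((B x₀).submatrix p q) i) = Dᵀᵀ ∘ p := by
      ext i j; rfl
    exact hp
  have hdet0 : ((B x₀).submatrix p q).det ≠ 0 := by
    intro h
    exact (isUnit_iff_isUnit_det _).mp hsq |>.ne_zero h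
  -- the determinant of the submatrix varies continuously
  have hcont : Continuous fun x => ((B x).submatrix p q).det := by
    refine Continuous.matrix_det ?_
    exact continuous_matrix fun i j => hB (p i) (q j)
  have hopen : IsOpen {x | ((B x).submatrix p q).det ≠ 0} :=
    (isOpen_compl_singleton.preimage hcont)
  have hmem : x₀ ∈ {x | ((B x).submatrix p q).det ≠ 0} := hdet0
  filter_upwards [hopen.mem_nhds hmem] with x hx
  -- on this neighborhood, the submatrix is invertible, so the rank is at least s
  have hunit : IsUnit ((B x).submatrix p q) := (isUnit_iff_isUnit_det _).mpr
    (isUnit_iff_ne_zero.mpr hx)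
  have hindep_sub : LinearIndependent 𝕜 (fun j => ((B x).submatrix p q)ᵀ j) :=
    linearIndependent_cols_iff_isUnit.mpr hunit
  -- hence s columns of B x are independent
  have hcomp : (fun j => ((B x).submatrix p q)ᵀ j)
      = (LinearMap.funLeft 𝕜 𝕜 p) ∘ ((B x)ᵀ ∘ q) := by
    ext j i; rfl
  have hindep : LinearIndependent 𝕜 ((B x)ᵀ ∘ q) := by
    apply LinearIndependent.of_comp (LinearMap.funLeft 𝕜 𝕜 p)
    rw [← hcomp]; exact hindep_sub
  rw [(B x).rank_eq_finrank_span_cols]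
  exact le_finrank_span_of_comp_linearIndependent (B x)ᵀ q hindep

/-- Upper semicontinuity of the dimension of the kernel of a single continuously
varying matrix. -/
private lemma ker_dim_upperSemicontinuous_single {X : Type*} [TopologicalSpace X]
    {𝕜 : Type*} [Field 𝕜] [TopologicalSpace 𝕜] [IsTopologicalRing 𝕜] [T1Space 𝕜]
    {ι : Type*} [Fintype ι] {m : ℕ}
    (B : X → Matrix ι (Fin m) 𝕜) (hB : ∀ j l, Continuous fun x => B x j l) :
    UpperSemicontinuous fun x => finrank 𝕜 (LinearMap.ker (B x).mulVecLin) := by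
  intro x₀ r hr
  have key : ∀ x, (B x).rank + finrank 𝕜 (LinearMap.ker (B x).mulVecLin) = m := by
    intro x
    rw [Matrix.rank]
    rw [LinearMap.finrank_range_add_finrank_ker (B x).mulVecLin]
    simp [Module.finrank_fintype_fun_eq_card]
  have hr' : finrank 𝕜 (LinearMap.ker (B x₀).mulVecLin) < r := hr
  filter_upwards [eventually_rank_le B hB x₀] with x hx
  show finrank 𝕜 (LinearMap.ker (B x).mulVecLin) < r
  have h1 := key x
  have h2 := key x₀
  omega
  
/-- Part (ii) of the semicontinuity lemma: for finitely many continuously varying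
matrices `Aᵢ : X → Matrix(mᵢ, m, 𝕜)` over a topological field `𝕜` with T1 topology,
the function sending `x` to the dimension of `⋂ᵢ ker(Aᵢ(x)) ⊆ 𝕜^m` is upper
semicontinuous. -/
theorem ker_inter_dim_upperSemicontinuous
    {X : Type*} [TopologicalSpace X] {𝕜 : Type*} [Field 𝕜] [TopologicalSpace 𝕜]
    [IsTopologicalDivisionRing 𝕜] [T1Space 𝕜] {n m : ℕ} {m' : Fin n → ℕ}
    (A : (i : Fin n) → X → Matrix (Fin (m' i)) (Fin m) 𝕜)
    (hA : ∀ i j l, Continuous fun x => A i x j l) :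
    UpperSemicontinuous
      (fun x => Module.finrank 𝕜
        (⨅ i, LinearMap.ker (Matrix.mulVecLin (A i x)) : Submodule 𝕜 (Fin m → 𝕜))) := by
  set B : X → Matrix ((i : Fin n) × Fin (m' i)) (Fin m) 𝕜 :=
    fun x p l => A p.1 x p.2 l with hB
  have hker : ∀ x, (⨅ i, LinearMap.ker (Matrix.mulVecLin (A i x)) : Submodule 𝕜 (Fin m → 𝕜))
      = LinearMap.ker (B x).mulVecLin := by
    intro x
    ext v
    simp only [Submodule.mem_iInf, LinearMap.mem_ker, mulVecLin_apply]
    constructor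
    · intro h
      ext p
      have := congrFun (h p.1) p.2
      simpa [hB, Matrix.mulVec, dotProduct] using this
    · intro h i
      ext j
      have := congrFun h ⟨i, j⟩
      simpa [hB, Matrix.mulVec, dotProduct] using this
  have : (fun x => Module.finrank 𝕜
        (⨅ i, LinearMap.ker (Matrix.mulVecLin (A i x)) : Submodule 𝕜 (Fin m → 𝕜)))
      = fun x => finrank 𝕜 (LinearMap.ker (B x).mulVecLin) := by
    funext x; rw [hker x]
  rw [this]
  exact ker_dim_upperSemicontinuous_single B fun p l => hA p.1 p.2 l
end

section
/- Let k be a field and let P₁, …, P₈ be eight distinct points of the projective plane P²(k) (given by nonzero representatives in k³, distinct as projective points) such that no three of the points are collinear (for no three of them does a nonzero homogeneous linear form in k[x₀,x₁,x₂] vanish at all three) and no six of the points lie on a conic (for no six of them does a nonzero homogeneous quadratic form in k[x₀,x₁,x₂] vanish at all six). Then the k-vector space of homogeneous polynomials of degree 3 in k[x₀,x₁,x₂] vanishing at all eight points has dimension exactly 2. -/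
open MvPolynomial

open Module Submodule

noncomputable def fd (v : Fin 3 → ℕ) : Fin 3 →₀ ℕ := Finsupp.equivFunOnFinite.symm v

private lemma fd_apply (v : Fin 3 → ℕ) (i : Fin 3) : fd v i = v i :=
  Finsupp.equivFunOnFinite_symm_apply_apply v i

private lemma degree_three (d : Fin 3 →₀ ℕ) : d.degree = d 0 + d 1 + d 2 := by
  rw [Finsupp.degree, ← Fin.sum_univ_three (fun i => d i)]
  apply Finset.sum_subset (Finset.subset_univ _)
  intro i _ h
  simpa [Finsupp.mem_support_iff] using h

private lemma fd_vals (d : Fin 3 →₀ ℕ) : fd ![d 0, d 1, d 2] = d := by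
  ext i; rw [fd_apply]; fin_cases i <;> rfl

private def vec1 : Fin 3 → Fin 3 → ℕ := ![![1,0,0],![0,1,0],![0,0,1]]
private def vec2 : Fin 6 → Fin 3 → ℕ :=
  ![![2,0,0],![1,1,0],![1,0,1],![0,2,0],![0,1,1],![0,0,2]]
private def vec3 : Fin 10 → Fin 3 → ℕ :=
  ![![3,0,0],![2,1,0],![2,0,1],![1,2,0],![1,1,1],![1,0,2],![0,3,0],![0,2,1],![0,1,2],![0,0,3]]

private lemma comp_of_vecs {n N : ℕ} (vec : Fin N → Fin 3 → ℕ)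
    (h : ∀ a b c : ℕ, a + b + c = n → ∃ j, vec j = ![a, b, c]) :
    ∀ d : Fin 3 →₀ ℕ, d.degree = n → ∃ j, fd (vec j) = d := by
  intro d hd
  obtain ⟨j, hj⟩ := h (d 0) (d 1) (d 2) (by rw [← degree_three]; exact hd)
  exact ⟨j, by rw [hj, fd_vals]⟩

private lemma comp1 : ∀ d : Fin 3 →₀ ℕ, d.degree = 1 → ∃ j, fd (vec1 j) = d := by
  apply comp_of_vecs
  intro a b c h
  have h1 : a ≤ 1 := by omega
  have h2 : b ≤ 1 := by omega
  have h3 : c ≤ 1 := by omega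
  interval_cases a <;> interval_cases b <;> interval_cases c <;> first | omega | decide

private lemma comp2 : ∀ d : Fin 3 →₀ ℕ, d.degree = 2 → ∃ j, fd (vec2 j) = d := by
  apply comp_of_vecs
  intro a b c h
  have h1 : a ≤ 2 := by omega
  have h2 : b ≤ 2 := by omega
  have h3 : c ≤ 2 := by omega
  interval_cases a <;> interval_cases b <;> interval_cases c <;> first | omega | decide

private lemma comp3 : ∀ d : Fin 3 →₀ ℕ, d.degree = 3 → ∃ j, fd (vec3 j) = d := by
  apply comp_of_vecs
  intro a b c h
  have h1 : a ≤ 3 := by omega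
  have h2 : b ≤ 3 := by omega
  have h3 : c ≤ 3 := by omega
  interval_cases a <;> interval_cases b <;> interval_cases c <;> first | omega | decide

private lemma homog_span {k : Type*} [Field k] {n N : ℕ} (vec : Fin N → Fin 3 → ℕ)
    (hdeg : ∀ j, vec j 0 + vec j 1 + vec j 2 = n)
    (hcomp : ∀ d : Fin 3 →₀ ℕ, d.degree = n → ∃ j, fd (vec j) = d) :
    homogeneousSubmodule (Fin 3) k n
      = Submodule.span k (Set.range fun j => (monomial (fd (vec j)) (1 : k))) := by
  apply le_antisymm
  · intro p hp
    rw [← support_sum_monomial_coeff p]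
    apply Submodule.sum_mem
    intro u hu
    have hdu : u.degree = n := by
      by_contra h
      exact (mem_support_iff.1 hu) (((mem_homogeneousSubmodule n p).1 hp).coeff_eq_zero h)
    obtain ⟨j, hj⟩ := hcomp u hdu
    have h2 : monomial u (coeff u p) = coeff u p • monomial u (1 : k) := by
      rw [smul_monomial, smul_eq_mul, mul_one]
    rw [h2, ← hj]
    exact Submodule.smul_mem _ _ (Submodule.subset_span ⟨j, rfl⟩)
  · rw [Submodule.span_le]
    rintro _ ⟨j, rfl⟩
    exact (mem_homogeneousSubmodule _ _).2 (isHomogeneous_monomial _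
      (by rw [degree_three]; simp only [fd_apply]; exact hdeg j))

private lemma homog_finrank {k : Type*} [Field k] {n N : ℕ} (vec : Fin N → Fin 3 → ℕ)
    (hinj : Function.Injective vec)
    (hdeg : ∀ j, vec j 0 + vec j 1 + vec j 2 = n)
    (hcomp : ∀ d : Fin 3 →₀ ℕ, d.degree = n → ∃ j, fd (vec j) = d) :
    finrank k ↥(homogeneousSubmodule (Fin 3) k n) = N := by
  rw [homog_span vec hdeg hcomp]
  have hli : LinearIndependent k fun j => monomial (fd (vec j)) (1 : k) := by
    have h := (basisMonomials (Fin 3) k).linearIndependent.comp (fun j => fd (vec j))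
      ((Finsupp.equivFunOnFinite.symm.injective).comp hinj)
    simpa [coe_basisMonomials, Function.comp_def] using h
  rw [finrank_span_eq_card hli, Fintype.card_fin]

private lemma aeval_lin_eval {k : Type*} [Field k] (Q : Fin 3 → k) (p : MvPolynomial (Fin 3) k) :
    (aeval Q : MvPolynomial (Fin 3) k →ₐ[k] k).toLinearMap p = eval Q p := by
  show aeval Q p = eval Q p
  rw [aeval_def, Algebra.algebraMap_self, eval₂_id]

private lemma exists_vanishing {k : Type*} [Field k] (P : Fin 8 → Fin 3 → k)
    (V : Submodule k (MvPolynomial (Fin 3) k)) [FiniteDimensional k V]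
    (S : Finset (Fin 8)) (hcard : S.card < finrank k V) :
    ∃ f ∈ V, f ≠ 0 ∧ ∀ s ∈ S, eval (P s) f = 0 := by
  classical
  let ψ : V →ₗ[k] (S → k) := LinearMap.pi
    (fun s => ((aeval (P s.1) : MvPolynomial (Fin 3) k →ₐ[k] k).toLinearMap).comp V.subtype)
  have hker : LinearMap.ker ψ ≠ ⊥ := by
    intro h
    have h1 := LinearMap.finrank_range_add_finrank_ker ψ
    rw [h, finrank_bot, add_zero] at h1
    have h2 : finrank k ↥(LinearMap.range ψ) ≤ S.card := by
      have h3 := Submodule.finrank_le (LinearMap.range ψ)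
      rwa [Module.finrank_pi, Fintype.card_coe] at h3
    omega
  obtain ⟨v, hv, hv0⟩ := (Submodule.ne_bot_iff _).1 hker
  refine ⟨(v : MvPolynomial (Fin 3) k), v.2, by simpa using hv0, fun s hs => ?_⟩
  have h3 := LinearMap.mem_ker.1 hv
  have h4 := congrFun h3 ⟨s, hs⟩
  have h5 : ((aeval (P s) : MvPolynomial (Fin 3) k →ₐ[k] k).toLinearMap).comp V.subtype v = 0 := h4
  rw [← aeval_lin_eval]
  exact h5

/-- For eight distinct points of `ℙ²(k)` in general position (no three collinear, no six
on a conic), the space of plane cubics through the eight points has dimension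
`10 - 8 = 2`. -/
theorem dim_cubics_through_eight_general_points
    {k : Type*} [Field k] (P : Fin 8 → Fin 3 → k)
    (hP0 : ∀ i, P i ≠ 0)
    (hdist : ∀ i j, i ≠ j → ¬ ∃ c : k, P j = c • P i)
    (hline : ∀ i j l : Fin 8, i ≠ j → j ≠ l → i ≠ l →
      ∀ f : MvPolynomial (Fin 3) k, f ∈ homogeneousSubmodule (Fin 3) k 1 → f ≠ 0 →
        ¬ (eval (P i) f = 0 ∧ eval (P j) f = 0 ∧ eval (P l) f = 0))
    (hconic : ∀ S : Finset (Fin 8), S.card = 6 →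
      ∀ f : MvPolynomial (Fin 3) k, f ∈ homogeneousSubmodule (Fin 3) k 2 → f ≠ 0 →
        ¬ (∀ i ∈ S, eval (P i) f = 0)) :
    Module.finrank k
      ↥(homogeneousSubmodule (Fin 3) k 3 ⊓
        ⨅ i, LinearMap.ker ((aeval (P i) : MvPolynomial (Fin 3) k →ₐ[k] k).toLinearMap)) = 2 := by
  classical
  have hsp1 := homog_span (k := k) vec1 (by decide) comp1
  have hsp2 := homog_span (k := k) vec2 (by decide) comp2
  have hsp3 := homog_span (k := k) vec3 (by decide) comp3
  haveI hfd1 : FiniteDimensional k ↥(homogeneousSubmodule (Fin 3) k 1) := by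
    rw [hsp1]; exact FiniteDimensional.span_of_finite k (Set.finite_range _)
  haveI hfd2 : FiniteDimensional k ↥(homogeneousSubmodule (Fin 3) k 2) := by
    rw [hsp2]; exact FiniteDimensional.span_of_finite k (Set.finite_range _)
  haveI hfd3 : FiniteDimensional k ↥(homogeneousSubmodule (Fin 3) k 3) := by
    rw [hsp3]; exact FiniteDimensional.span_of_finite k (Set.finite_range _)
  have hr1 : finrank k ↥(homogeneousSubmodule (Fin 3) k 1) = 3 :=
    homog_finrank vec1 (by decide) (by decide) comp1
  have hr2 : finrank k ↥(homogeneousSubmodule (Fin 3) k 2) = 6 :=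
    homog_finrank vec2 (by decide) (by decide) comp2
  have hr3 : finrank k ↥(homogeneousSubmodule (Fin 3) k 3) = 10 :=
    homog_finrank vec3 (by decide) (by decide) comp3
  set W := homogeneousSubmodule (Fin 3) k 3 with hWdef
  -- key interpolation step
  have key : ∀ i : Fin 8, ∃ w : MvPolynomial (Fin 3) k, w ∈ W ∧
      (∀ m : Fin 8, m ≠ i → eval (P m) w = 0) ∧ eval (P i) w ≠ 0 := by
    intro i
    obtain ⟨j, l, hji, hli, hjl⟩ : ∃ j l : Fin 8, j ≠ i ∧ l ≠ i ∧ j ≠ l := by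
      revert i; decide
    -- the line through P j and P l
    obtain ⟨f, hf1, hf0, hfv⟩ := exists_vanishing P (homogeneousSubmodule (Fin 3) k 1)
      {j, l} (by rw [hr1, Finset.card_pair hjl]; omega)
    have hfj : eval (P j) f = 0 := hfv j (by simp)
    have hfl : eval (P l) f = 0 := hfv l (by simp)
    have hfi : eval (P i) f ≠ 0 := fun h0 =>
      hline i j l (Ne.symm hji) hjl (Ne.symm hli) f hf1 hf0 ⟨h0, hfj, hfl⟩
    -- the conic through the other five points
    set S5 : Finset (Fin 8) := Finset.univ \ {i, j, l} with hS5
    have hcard3 : ({i, j, l} : Finset (Fin 8)).card = 3 := by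
      rw [Finset.card_insert_of_notMem (by simp [Ne.symm hji, Ne.symm hli]),
        Finset.card_insert_of_notMem (by simpa using hjl), Finset.card_singleton]
    have hcard5 : S5.card = 5 := by
      rw [hS5, Finset.card_sdiff_of_subset (Finset.subset_univ _), hcard3]
      simp
    obtain ⟨g, hg1, hg0, hgv⟩ := exists_vanishing P (homogeneousSubmodule (Fin 3) k 2)
      S5 (by rw [hr2, hcard5]; omega)
    have hiS5 : i ∉ S5 := by simp [hS5]
    have hgi : eval (P i) g ≠ 0 := by
      intro h0
      refine hconic (insert i S5) ?_ g hg1 hg0 ?_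
      · rw [Finset.card_insert_of_notMem hiS5, hcard5]
      · intro m hm
        rcases Finset.mem_insert.1 hm with rfl | hm'
        · exact h0
        · exact hgv m hm'
    refine ⟨f * g, ?_, ?_, ?_⟩
    · rw [hWdef]
      refine (mem_homogeneousSubmodule _ _).2 ?_
      have h12 := ((mem_homogeneousSubmodule 1 f).1 hf1).mul ((mem_homogeneousSubmodule 2 g).1 hg1)
      norm_num at h12
      exact h12
    · intro m hmi
      rw [map_mul]
      by_cases hm : m ∈ S5
      · rw [hgv m hm, mul_zero]
      · have hmem : m = i ∨ m = j ∨ m = l := by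
          simp only [hS5, Finset.mem_sdiff, Finset.mem_univ, true_and, not_not,
            Finset.mem_insert, Finset.mem_singleton] at hm
          tauto
        rcases hmem with rfl | rfl | rfl
        · exact absurd rfl hmi
        · rw [hfj, zero_mul]
        · rw [hfl, zero_mul]
    · rw [map_mul]
      exact mul_ne_zero hfi hgi
  -- the evaluation map on cubics
  set φ : W →ₗ[k] (Fin 8 → k) := LinearMap.pi
    (fun i => ((aeval (P i) : MvPolynomial (Fin 3) k →ₐ[k] k).toLinearMap).comp W.subtype)
    with hφ
  have hkermap : Submodule.map W.subtype (LinearMap.ker φ)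
      = W ⊓ ⨅ i, LinearMap.ker ((aeval (P i) : MvPolynomial (Fin 3) k →ₐ[k] k).toLinearMap) := by
    rw [hφ, LinearMap.ker_pi]
    have h1 : (⨅ i, LinearMap.ker
          (((aeval (P i) : MvPolynomial (Fin 3) k →ₐ[k] k).toLinearMap).comp W.subtype))
        = Submodule.comap W.subtype
          (⨅ i, LinearMap.ker ((aeval (P i) : MvPolynomial (Fin 3) k →ₐ[k] k).toLinearMap)) := by
      simp only [LinearMap.ker_comp]
      exact (Submodule.comap_iInf _ _).symm
    rw [h1, Submodule.map_comap_subtype]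
  have hrange : LinearMap.range φ = ⊤ := by
    rw [eq_top_iff]
    rintro g -
    choose w hwW hw0 hwi using key
    set u : Fin 8 → W := fun i => (eval (P i) (w i))⁻¹ • (⟨w i, hwW i⟩ : W) with hu_def
    have hu : ∀ i, φ (u i) = Pi.single i 1 := by
      intro i
      funext m
      have hφm : φ (u i) m
          = (aeval (P m) : MvPolynomial (Fin 3) k →ₐ[k] k).toLinearMap ((u i : MvPolynomial (Fin 3) k)) := rfl
      rw [hφm, aeval_lin_eval, hu_def]
      simp only [SetLike.val_smul, smul_eq_C_mul]
      rw [map_mul, eval_C]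
      by_cases hmi : m = i
      · subst hmi
        rw [Pi.single_eq_same, inv_mul_cancel₀ (hwi m)]
      · rw [Pi.single_eq_of_ne hmi, hw0 i m hmi, mul_zero]
    refine ⟨∑ i, g i • u i, ?_⟩
    rw [map_sum]
    have h2 : ∀ i, φ (g i • u i) = Pi.single i (g i) := by
      intro i
      rw [map_smul, hu i, ← Pi.single_smul, smul_eq_mul, mul_one]
    simp_rw [h2]
    exact Finset.univ_sum_single g
  have hrn := LinearMap.finrank_range_add_finrank_ker φ
  rw [hrange, finrank_top, Module.finrank_pi, Fintype.card_fin] at hrn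
  rw [← hkermap, Submodule.finrank_map_subtype_eq]
  rw [hr3] at hrn
  omega
end

section
/- Let S be any nonempty subset of {1, …, 9} of even cardinality. Then the number of unordered pairs {A, B} of distinct subsets of {1, …, 9}, each of cardinality 3 or 7, whose symmetric difference A Δ B equals S, is exactly 28. -/
open Finset

private def Tset (S : Finset (Fin 9)) : Finset (Finset (Fin 9)) :=
  univ.filter (fun A => (A.card = 3 ∨ A.card = 7) ∧
    ((symmDiff A S).card = 3 ∨ (symmDiff A S).card = 7))

private def pairs (S : Finset (Fin 9)) : Finset (Finset (Finset (Fin 9))) :=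
  (Tset S).image (fun A => ({A, symmDiff A S} : Finset (Finset (Fin 9))))

private lemma mem_Tset {S A : Finset (Fin 9)} :
    A ∈ Tset S ↔ (A.card = 3 ∨ A.card = 7) ∧
      ((symmDiff A S).card = 3 ∨ (symmDiff A S).card = 7) := by
  simp [Tset]

private lemma exists_perm_image_eq (s t : Finset (Fin 9)) (h : s.card = t.card) :
    ∃ σ : Equiv.Perm (Fin 9), s.image σ = t := by
  have h' : sᶜ.card = tᶜ.card := by
    simp [Finset.card_compl, h]
  let e1 : {x // x ∈ s} ≃ {x // x ∈ t} := Finset.equivOfCardEq h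
  let e2 : {x // x ∈ sᶜ} ≃ {x // x ∈ tᶜ} := Finset.equivOfCardEq h'
  let e2' : {x // ¬ x ∈ s} ≃ {x // ¬ x ∈ t} :=
    ((Equiv.subtypeEquivRight (fun x => by simp)).trans e2).trans
      (Equiv.subtypeEquivRight (fun x => by simp))
  let σ : Equiv.Perm (Fin 9) :=
    ((Equiv.sumCompl (· ∈ s)).symm.trans (e1.sumCongr e2')).trans (Equiv.sumCompl (· ∈ t))
  refine ⟨σ, ?_⟩
  have hsub : s.image σ ⊆ t := by
    intro y hy
    obtain ⟨x, hx, rfl⟩ := Finset.mem_image.mp hy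
    have : σ x = e1 ⟨x, hx⟩ := by
      simp [σ, Equiv.sumCompl_symm_apply_of_pos hx]
    rw [this]
    exact (e1 ⟨x, hx⟩).2
  refine Finset.eq_of_subset_of_card_le hsub ?_
  rw [Finset.card_image_of_injective _ σ.injective, h]

private lemma image_mem_Tset (σ : Equiv.Perm (Fin 9)) {S A : Finset (Fin 9)}
    (hA : A ∈ Tset S) : A.image σ ∈ Tset (S.image σ) := by
  rw [mem_Tset] at hA ⊢
  rw [← Finset.image_symmDiff _ _ σ.injective]
  rw [Finset.card_image_of_injective _ σ.injective,
    Finset.card_image_of_injective _ σ.injective]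
  exact hA

private lemma pairs_image (σ : Equiv.Perm (Fin 9)) (S : Finset (Fin 9)) :
    pairs (S.image σ) = (pairs S).image (fun P => P.image (fun A => A.image σ)) := by
  ext P
  simp only [pairs, Finset.mem_image]
  constructor
  · rintro ⟨A', hA', rfl⟩
    refine ⟨{A'.image σ.symm, symmDiff (A'.image σ.symm) S}, ⟨A'.image σ.symm, ?_, rfl⟩, ?_⟩
    · have hS : S = (S.image σ).image σ.symm := by
        rw [Finset.image_image]; simp
      rw [hS]
      exact image_mem_Tset σ.symm hA'
    · rw [Finset.image_insert, Finset.image_singleton, Finset.image_image]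
      have h1 : A'.image (⇑σ ∘ ⇑σ.symm) = A' := by simp
      have h2 : (symmDiff (A'.image σ.symm) S).image σ = symmDiff A' (S.image σ) := by
        rw [Finset.image_symmDiff _ _ σ.injective, Finset.image_image]
        simp
      rw [h1, h2]
  · rintro ⟨P', ⟨A, hA, rfl⟩, rfl⟩
    refine ⟨A.image σ, image_mem_Tset σ hA, ?_⟩
    rw [Finset.image_insert, Finset.image_singleton,
      Finset.image_symmDiff _ _ σ.injective]

private lemma pairs_card_invariant (σ : Equiv.Perm (Fin 9)) (S : Finset (Fin 9)) :
    (pairs (S.image σ)).card = (pairs S).card := by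
  rw [pairs_image σ S]
  exact Finset.card_image_of_injective _
    (Finset.image_injective (Finset.image_injective σ.injective))

private lemma setOf_eq_pairs (S : Finset (Fin 9)) (hS : S.Nonempty) :
    {P : Finset (Finset (Fin 9)) |
      ∃ A B : Finset (Fin 9), A ≠ B ∧ P = {A, B} ∧
        (A.card = 3 ∨ A.card = 7) ∧ (B.card = 3 ∨ B.card = 7) ∧
        symmDiff A B = S} = ↑(pairs S) := by
  have hSne : S ≠ ∅ := Finset.nonempty_iff_ne_empty.mp hS
  ext P
  simp only [Set.mem_setOf_eq, Finset.coe_image, Set.mem_image, Finset.mem_coe, pairs,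
    Finset.mem_image]
  constructor
  · rintro ⟨A, B, hne, rfl, hA, hB, hAB⟩
    have hBval : B = symmDiff A S := by
      rw [← hAB, symmDiff_symmDiff_cancel_left]
    refine ⟨A, mem_Tset.mpr ⟨hA, ?_⟩, ?_⟩
    · rw [← hBval]; exact hB
    · rw [← hBval]
  · rintro ⟨A, hA, rfl⟩
    rw [mem_Tset] at hA
    refine ⟨A, symmDiff A S, ?_, rfl, hA.1, hA.2, by rw [symmDiff_symmDiff_cancel_left]⟩
    intro h
    apply hSne
    have := congrArg (symmDiff A) h
    rw [symmDiff_symmDiff_cancel_left, symmDiff_self] at this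
    rw [← this]
    rfl

/-- Combinatorial Steiner complex structure on the 120 tritangents: for any nonempty
subset `S` of a 9-element set of even cardinality, there are exactly 28 unordered pairs
`{A, B}` of distinct subsets, each of cardinality 3 or 7, with symmetric difference
`A ∆ B = S`. -/
theorem steiner_block_card_28 (S : Finset (Fin 9)) (hS : S.Nonempty) (hEven : Even S.card) :
    Nat.card {P : Finset (Finset (Fin 9)) //
      ∃ A B : Finset (Fin 9), A ≠ B ∧ P = {A, B} ∧
        (A.card = 3 ∨ A.card = 7) ∧ (B.card = 3 ∨ B.card = 7) ∧
        symmDiff A B = S} = 28 := by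
  have key : Nat.card {P : Finset (Finset (Fin 9)) //
      ∃ A B : Finset (Fin 9), A ≠ B ∧ P = {A, B} ∧
        (A.card = 3 ∨ A.card = 7) ∧ (B.card = 3 ∨ B.card = 7) ∧
        symmDiff A B = S} = (pairs S).card := by
    have h1 : Nat.card {P : Finset (Finset (Fin 9)) //
        ∃ A B : Finset (Fin 9), A ≠ B ∧ P = {A, B} ∧
          (A.card = 3 ∨ A.card = 7) ∧ (B.card = 3 ∨ B.card = 7) ∧
          symmDiff A B = S} =
        ({P : Finset (Finset (Fin 9)) |
          ∃ A B : Finset (Fin 9), A ≠ B ∧ P = {A, B} ∧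
            (A.card = 3 ∨ A.card = 7) ∧ (B.card = 3 ∨ B.card = 7) ∧
            symmDiff A B = S} : Set _).ncard := (Nat.card_coe_set_eq _).symm ▸ rfl
    rw [h1, setOf_eq_pairs S hS, Set.ncard_coe_finset]
  rw [key]
  have hpos : 0 < S.card := Finset.card_pos.mpr hS
  have hle : S.card ≤ 9 := by
    have := Finset.card_le_univ S
    simpa using this
  have hcases : S.card = 2 ∨ S.card = 4 ∨ S.card = 6 ∨ S.card = 8 := by
    obtain ⟨k, hk⟩ := hEven
    omega
  have get28 : ∀ (S₀ : Finset (Fin 9)), S.card = S₀.card → (pairs S₀).card = 28 →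
      (pairs S).card = 28 := by
    intro S₀ hcard h28
    obtain ⟨σ, hσ⟩ := exists_perm_image_eq S S₀ hcard
    rw [← hσ] at h28
    rw [← h28, pairs_card_invariant]
  rcases hcases with h | h | h | h
  · exact get28 {0, 1} (by rw [h]; decide) (by decide)
  · exact get28 {0, 1, 2, 3} (by rw [h]; decide) (by decide)
  · exact get28 {0, 1, 2, 3, 4, 5} (by rw [h]; decide) (by decide)
  · exact get28 {0, 1, 2, 3, 4, 5, 6, 7} (by rw [h]; decide) (by decide)
end
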